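/- arXiv:2001.11249 — 4 statements merged into one kernel-verified Lean document; each statement's English description precedes it below -/
import Mathlib

section
/- For loss variables L^1,...,L^J each taking values in [0,1] with E[L^j] = ℓ̄^j, weights w^1,...,w^J ≥ 0 summing to 1, and portfolio loss L = Σ w^j L^j, the worst-case comonotonic loss vector L*_j = 1{U > 1 - ℓ̄^j} (U uniform on [0,1], with ℓ̄^1 ≤ ... ≤ ℓ̄^J) satisfies E[1 - L* - (κ - L*)^+] ≤ E[1 - L - (κ - L)^+] for every κ ∈ [0,1], where L* = Σ w^j L*_j. -/
open MeasureTheory Finset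

private lemma ico_shift (w : ℕ → ℝ) (k n : ℕ) :
    ∑ i ∈ Ico (k+1) (n+1), w i = ∑ i ∈ Ico k n, w (i+1) := by
  rw [Finset.sum_Ico_eq_sum_range, Finset.sum_Ico_eq_sum_range, Nat.succ_sub_succ]
  exact Finset.sum_congr rfl fun i _ => by congr 1; omega

private lemma key_sum (κ : ℝ) (hκ : 0 ≤ κ) :
    ∀ (n : ℕ) (w x : ℕ → ℝ),
      (∀ i j, i ≤ j → x i = 1 → x j = 1) → (∀ k, x k = 0 ∨ x k = 1) →
      ∑ k ∈ range n, (min κ (∑ i ∈ Ico k n, w i) - min κ (∑ i ∈ Ico (k+1) n, w i)) * x k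
        = min κ (∑ k ∈ range n, w k * x k) := by
  intro n
  induction n with
  | zero => intro w x _ _; simp [min_eq_right hκ]
  | succ n ih =>
    intro w x hmono hx
    rw [Finset.sum_range_succ' (fun k => (min κ (∑ i ∈ Ico k (n+1), w i)
        - min κ (∑ i ∈ Ico (k+1) (n+1), w i)) * x k) n,
      Finset.sum_range_succ' (fun k => w k * x k) n]
    have hsh : ∀ k, ∑ i ∈ Ico (k+1) (n+1), w i = ∑ i ∈ Ico k n, w (i+1) :=
      fun k => ico_shift w k n
    have htail : ∑ k ∈ range n, (min κ (∑ i ∈ Ico (k+1) (n+1), w i)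
        - min κ (∑ i ∈ Ico (k+1+1) (n+1), w i)) * x (k+1)
        = min κ (∑ k ∈ range n, w (k+1) * x (k+1)) := by
      have := ih (fun i => w (i+1)) (fun i => x (i+1))
        (fun i j hij h1 => hmono (i+1) (j+1) (by omega) h1) (fun k => hx (k+1))
      simpa [hsh] using this
    rw [htail]
    have hT0 : ∑ i ∈ Ico 0 (n+1), w i = w 0 + ∑ i ∈ Ico 1 (n+1), w i := by
      rw [Finset.sum_eq_sum_Ico_succ_bot (by omega)]
    rcases hx 0 with h0 | h0
    · simp [h0]
    · have hall : ∀ k, x k = 1 := fun k => hmono 0 k (by omega) h0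
      have hB : ∑ k ∈ range n, w (k+1) * x (k+1) = ∑ i ∈ Ico 1 (n+1), w i := by
        calc ∑ k ∈ range n, w (k+1) * x (k+1) = ∑ k ∈ range n, w (k+1) :=
              Finset.sum_congr rfl fun k _ => by rw [hall (k+1), mul_one]
          _ = ∑ i ∈ Ico 0 n, w (i+1) := by rw [Finset.range_eq_Ico]
          _ = ∑ i ∈ Ico 1 (n+1), w i := (hsh 0).symm
      rw [hB, h0, hT0]
      simp only [mul_one]
      rw [add_comm (∑ i ∈ Ico 1 (n+1), w i) (w 0)]
      ring

private lemma max_sub_eq (a b : ℝ) : max (a - b) 0 = a - min a b := by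
  rcases le_total a b with h | h
  · rw [min_eq_left h, max_eq_right (by linarith), sub_self]
  · rw [min_eq_right h, max_eq_left (by linarith)]

theorem worst_case_minimizes_ESB_price
    {Ω : Type*} [MeasurableSpace Ω] (μ : Measure Ω) [IsProbabilityMeasure μ]
    {J : ℕ} (L : Fin J → Ω → ℝ) (ℓ : Fin J → ℝ) (w : Fin J → ℝ)
    (hLmeas : ∀ j, Measurable (L j))
    (hL01 : ∀ j ω, L j ω ∈ Set.Icc (0:ℝ) 1)
    (hmean : ∀ j, ∫ ω, L j ω ∂μ = ℓ j)
    (hℓmono : Monotone ℓ)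
    (hw : ∀ j, 0 ≤ w j) (hwsum : ∑ j, w j = 1)
    (U : Ω → ℝ) (hU : Measurable U)
    (hUnif : ∀ c ∈ Set.Icc (0:ℝ) 1, μ {ω | U ω ≤ c} = ENNReal.ofReal c)
    (κ : ℝ) (hκ : κ ∈ Set.Icc (0:ℝ) 1) :
    (∫ ω, (1 - (∑ j, w j * (if 1 - ℓ j < U ω then (1:ℝ) else 0))
        - max (κ - ∑ j, w j * (if 1 - ℓ j < U ω then (1:ℝ) else 0)) 0) ∂μ)
      ≤ ∫ ω, (1 - (∑ j, w j * L j ω) - max (κ - ∑ j, w j * L j ω) 0) ∂μ := by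
  obtain ⟨hκ0, hκ1⟩ := hκ
  -- integrability of L j
  have hIntL : ∀ j, Integrable (L j) μ := by
    intro j
    refine ⟨(hLmeas j).aestronglyMeasurable, ?_⟩
    refine HasFiniteIntegral.of_bounded (C := 1) (ae_of_all _ fun ω => ?_)
    rw [Real.norm_eq_abs, abs_le]
    exact ⟨by linarith [(hL01 j ω).1], (hL01 j ω).2⟩
  have hℓ0 : ∀ j, 0 ≤ ℓ j := fun j => by
    rw [← hmean j]; exact integral_nonneg fun ω => (hL01 j ω).1
  have hℓ1 : ∀ j, ℓ j ≤ 1 := by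
    intro j
    rw [← hmean j]
    calc ∫ ω, L j ω ∂μ ≤ ∫ _, (1:ℝ) ∂μ :=
          integral_mono (hIntL j) (integrable_const 1) fun ω => (hL01 j ω).2
      _ = 1 := by simp
  -- the weights as a function on ℕ and tail sums
  set w' : ℕ → ℝ := fun m => if h : m < J then w ⟨m, h⟩ else 0 with hw'def
  set T : ℕ → ℝ := fun m => ∑ i ∈ Finset.Ico m J, w' i with hTdef
  set c : Fin J → ℝ := fun j => min κ (T j.val) - min κ (T (j.val + 1)) with hcdef
  have hw'j : ∀ j : Fin J, w' j.val = w j := by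
    intro j; simp only [hw'def, j.isLt, dif_pos, Fin.eta]
  have hw'0 : ∀ m, 0 ≤ w' m := by
    intro m; simp only [hw'def]; split_ifs with h
    · exact hw _
    · exact le_rfl
  have hTmono : ∀ m, T (m + 1) ≤ T m := by
    intro m
    exact Finset.sum_le_sum_of_subset_of_nonneg
      (Finset.Ico_subset_Ico (by omega) le_rfl) (fun i _ _ => hw'0 i)
  have hTsucc : ∀ j : Fin J, T j.val = w j + T (j.val + 1) := by
    intro j
    rw [hTdef]
    simp only
    rw [Finset.sum_eq_sum_Ico_succ_bot j.isLt]
    rw [hw'j j]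
  have hc0 : ∀ j, 0 ≤ c j := by
    intro j
    have := min_le_min (le_refl κ) (hTmono j.val)
    simp only [hcdef]
    linarith
  have hcw : ∀ j, c j ≤ w j := by
    intro j
    simp only [hcdef]
    rcases le_total κ (T (j.val + 1)) with h | h
    · rw [min_eq_left h]
      have := min_le_left κ (T j.val)
      linarith [hw j]
    · rw [min_eq_right h]
      have h2 := min_le_right κ (T j.val)
      linarith [hTsucc j]
  have hT0 : T 0 = 1 := by
    rw [hTdef]
    simp only
    rw [← Finset.range_eq_Ico, ← Fin.sum_univ_eq_sum_range w' J]
    rw [← hwsum]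
    exact Finset.sum_congr rfl fun j _ => hw'j j
  have hTJ : T J = 0 := by rw [hTdef]; simp
  have hcsum : ∑ j, c j = κ := by
    have := Fin.sum_univ_eq_sum_range (fun m => min κ (T m) - min κ (T (m + 1))) J
    rw [hcdef]
    rw [this, Finset.sum_range_sub' (fun m => min κ (T m)) J, hT0, hTJ,
      min_eq_left hκ1, min_eq_right hκ0]
    ring
  -- the worst-case indicator variables
  have hXmeas : ∀ j : Fin J, Measurable (fun ω => if 1 - ℓ j < U ω then (1:ℝ) else 0) := by
    intro j
    exact Measurable.ite (measurableSet_lt measurable_const hU) measurable_const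
      measurable_const
  have hIntX : ∀ j : Fin J,
      Integrable (fun ω => if 1 - ℓ j < U ω then (1:ℝ) else 0) μ := by
    intro j
    refine ⟨(hXmeas j).aestronglyMeasurable, ?_⟩
    refine HasFiniteIntegral.of_bounded (C := 1) (ae_of_all _ fun ω => ?_)
    split_ifs <;> simp
  have hXint : ∀ j : Fin J, ∫ ω, (if 1 - ℓ j < U ω then (1:ℝ) else 0) ∂μ = ℓ j := by
    intro j
    have hseq : (fun ω => if 1 - ℓ j < U ω then (1:ℝ) else 0)
        = Set.indicator {ω | 1 - ℓ j < U ω} (fun _ => (1:ℝ)) := by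
      ext ω
      rw [Set.indicator_apply]
      rfl
    have hsm : MeasurableSet {ω | 1 - ℓ j < U ω} := measurableSet_lt measurable_const hU
    rw [hseq, MeasureTheory.integral_indicator_const (1:ℝ) hsm, measureReal_def]
    have hcompl : {ω | 1 - ℓ j < U ω} = {ω | U ω ≤ 1 - ℓ j}ᶜ := by
      ext ω; simp [Set.mem_setOf_eq, not_le]
    rw [hcompl, measure_compl (measurableSet_le hU measurable_const) (measure_ne_top μ _),
      measure_univ, hUnif (1 - ℓ j) ⟨by linarith [hℓ1 j], by linarith [hℓ0 j]⟩]
    have h1 : (1 : ENNReal) = ENNReal.ofReal 1 := by simp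
    rw [h1, ← ENNReal.ofReal_sub 1 (by linarith [hℓ1 j] : (0:ℝ) ≤ 1 - ℓ j)]
    have : (1 : ℝ) - (1 - ℓ j) = ℓ j := by ring
    rw [this, smul_eq_mul, mul_one, ENNReal.toReal_ofReal (hℓ0 j)]
  -- the key comonotone identity, pointwise
  have hkey : ∀ ω, ∑ j, c j * (if 1 - ℓ j < U ω then (1:ℝ) else 0)
      = min κ (∑ j, w j * (if 1 - ℓ j < U ω then (1:ℝ) else 0)) := by
    intro ω
    set ℓ' : ℕ → ℝ := fun m => if h : m < J then ℓ ⟨m, h⟩ else 1 with hℓ'def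
    set x : ℕ → ℝ := fun m => if 1 - ℓ' m < U ω then 1 else 0 with hxdef
    have hℓ'mono : Monotone ℓ' := by
      intro a b hab
      simp only [hℓ'def]
      split_ifs with ha hb hb
      · exact hℓmono (by exact hab)
      · exact hℓ1 _
      · omega
      · exact le_rfl
    have hxmono : ∀ i j, i ≤ j → x i = 1 → x j = 1 := by
      intro i j hij hxi
      have h1 : 1 - ℓ' i < U ω := by
        by_contra h
        simp only [hxdef, if_neg h] at hxi
        norm_num at hxi
      have h2 : 1 - ℓ' j < U ω := lt_of_le_of_lt (by linarith [hℓ'mono hij]) h1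
      simp only [hxdef, if_pos h2]
    have hx01 : ∀ k, x k = 0 ∨ x k = 1 := by
      intro k; simp only [hxdef]; split_ifs
      · exact Or.inr rfl
      · exact Or.inl rfl
    have hks := key_sum κ hκ0 J w' x hxmono hx01
    have hxj : ∀ j : Fin J, x j.val = (if 1 - ℓ j < U ω then (1:ℝ) else 0) := by
      intro j
      simp only [hxdef, hℓ'def, j.isLt, dif_pos, Fin.eta]
    have e1 : ∑ j, c j * (if 1 - ℓ j < U ω then (1:ℝ) else 0)
        = ∑ k ∈ Finset.range J, (min κ (T k) - min κ (T (k+1))) * x k := by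
      rw [← Fin.sum_univ_eq_sum_range (fun k => (min κ (T k) - min κ (T (k+1))) * x k) J]
      exact Finset.sum_congr rfl fun j _ => by rw [hxj j, hcdef]
    have e2 : ∑ j, w j * (if 1 - ℓ j < U ω then (1:ℝ) else 0)
        = ∑ k ∈ Finset.range J, w' k * x k := by
      rw [← Fin.sum_univ_eq_sum_range (fun k => w' k * x k) J]
      exact Finset.sum_congr rfl fun j _ => by rw [hxj j, hw'j j]
    rw [e1, e2, ← hks]
  -- rewrite the LHS integrand as a linear functional of the indicators
  have hLeq : (∫ ω, (1 - (∑ j, w j * (if 1 - ℓ j < U ω then (1:ℝ) else 0))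
        - max (κ - ∑ j, w j * (if 1 - ℓ j < U ω then (1:ℝ) else 0)) 0) ∂μ)
      = ∫ ω, (1 - κ - ∑ j, (w j - c j) * (if 1 - ℓ j < U ω then (1:ℝ) else 0)) ∂μ := by
    apply integral_congr_ae
    filter_upwards with ω
    have hk := hkey ω
    rw [max_sub_eq κ _, ← hk]
    have hsub : ∑ j, (w j - c j) * (if 1 - ℓ j < U ω then (1:ℝ) else 0)
        = ∑ j, w j * (if 1 - ℓ j < U ω then (1:ℝ) else 0)
          - ∑ j, c j * (if 1 - ℓ j < U ω then (1:ℝ) else 0) := by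
      rw [← Finset.sum_sub_distrib]
      exact Finset.sum_congr rfl fun j _ => by ring
    rw [hsub]
    ring
  have hLval : ∫ ω, (1 - κ - ∑ j, (w j - c j) * (if 1 - ℓ j < U ω then (1:ℝ) else 0)) ∂μ
      = 1 - κ - ∑ j, (w j - c j) * ℓ j := by
    rw [integral_sub (integrable_const _)
      (integrable_finset_sum _ fun j _ => (hIntX j).const_mul _)]
    rw [integral_const]
    rw [integral_finset_sum _ fun j _ => (hIntX j).const_mul _]
    simp only [measureReal_def, measure_univ, ENNReal.toReal_one, one_smul]
    congr 1
    exact Finset.sum_congr rfl fun j _ => by rw [MeasureTheory.integral_const_mul, hXint j]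
  -- the RHS integrand dominates the same linear functional of L
  have hRval : ∫ ω, (1 - κ - ∑ j, (w j - c j) * L j ω) ∂μ
      = 1 - κ - ∑ j, (w j - c j) * ℓ j := by
    rw [integral_sub (integrable_const _)
      (integrable_finset_sum _ fun j _ => (hIntL j).const_mul _)]
    rw [integral_const]
    rw [integral_finset_sum _ fun j _ => (hIntL j).const_mul _]
    simp only [measureReal_def, measure_univ, ENNReal.toReal_one, one_smul]
    congr 1
    exact Finset.sum_congr rfl fun j _ => by rw [MeasureTheory.integral_const_mul, hmean j]
  have hSLmeas : Measurable (fun ω => ∑ j, w j * L j ω) :=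
    Finset.measurable_sum _ fun j _ => (hLmeas j).const_mul _
  have hSL01 : ∀ ω, (0:ℝ) ≤ ∑ j, w j * L j ω ∧ (∑ j, w j * L j ω) ≤ 1 := by
    intro ω
    constructor
    · exact Finset.sum_nonneg fun j _ => mul_nonneg (hw j) (hL01 j ω).1
    · calc ∑ j, w j * L j ω ≤ ∑ j, w j :=
            Finset.sum_le_sum fun j _ => by
              nlinarith [(hL01 j ω).2, hw j, (hL01 j ω).1]
        _ = 1 := hwsum
  have hRint : Integrable
      (fun ω => 1 - (∑ j, w j * L j ω) - max (κ - ∑ j, w j * L j ω) 0) μ := by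
    refine ⟨(((measurable_const.sub hSLmeas).sub
      ((measurable_const.sub hSLmeas).max measurable_const))).aestronglyMeasurable, ?_⟩
    refine HasFiniteIntegral.of_bounded (C := 3) (ae_of_all _ fun ω => ?_)
    rw [Real.norm_eq_abs, abs_le]
    obtain ⟨h0, h1⟩ := hSL01 ω
    have hm1 : max (κ - ∑ j, w j * L j ω) 0 ≤ 1 := max_le (by linarith) (by norm_num)
    have hm0 : (0:ℝ) ≤ max (κ - ∑ j, w j * L j ω) 0 := le_max_right _ _
    constructor <;> linarith
  have hRmono : ∫ ω, (1 - κ - ∑ j, (w j - c j) * L j ω) ∂μ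
      ≤ ∫ ω, (1 - (∑ j, w j * L j ω) - max (κ - ∑ j, w j * L j ω) 0) ∂μ := by
    refine integral_mono (((integrable_const _)).sub
      (integrable_finset_sum _ fun j _ => (hIntL j).const_mul _)) hRint fun ω => ?_
    have hcl : ∑ j, c j * L j ω ≤ ∑ j, w j * L j ω :=
      Finset.sum_le_sum fun j _ => mul_le_mul_of_nonneg_right (hcw j) (hL01 j ω).1
    have hck : ∑ j, c j * L j ω ≤ κ := by
      calc ∑ j, c j * L j ω ≤ ∑ j, c j :=
            Finset.sum_le_sum fun j _ => by
              nlinarith [(hL01 j ω).2, hc0 j, (hL01 j ω).1]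
        _ = κ := hcsum
    have hmax : max (κ - ∑ j, w j * L j ω) 0 ≤ κ - ∑ j, c j * L j ω :=
      max_le (by linarith) (by linarith)
    have hsub : ∑ j, (w j - c j) * L j ω
        = ∑ j, w j * L j ω - ∑ j, c j * L j ω := by
      rw [← Finset.sum_sub_distrib]
      exact Finset.sum_congr rfl fun j _ => by ring
    simp only [hsub]
    linarith
  rw [hLeq, hLval]
  rw [← hRval]
  exact hRmono
end

section
/- Let L be a random variable with values in [0,1] and E[L] = ℓ̄. Then for every α ∈ [0,1), the expected shortfall satisfies ES_α(L) ≤ (1/(1-α)) · min(1-α, ℓ̄), and this bound is attained by the Bernoulli variable L* = 1{U > 1 - ℓ̄} with U uniform on [0,1]. -/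
open MeasureTheory

/-- The `u`-quantile of a random variable `Z` under `μ`. -/
noncomputable def quantile {Ω : Type*} [MeasurableSpace Ω]
    (μ : Measure Ω) (Z : Ω → ℝ) (u : ℝ) : ℝ :=
  sInf {x : ℝ | ENNReal.ofReal u ≤ μ {ω | Z ω ≤ x}}

/-- Expected shortfall at level `α`: `(1/(1-α)) ∫_α^1 q_u du`. -/
noncomputable def ES {Ω : Type*} [MeasurableSpace Ω]
    (μ : Measure Ω) (Z : Ω → ℝ) (α : ℝ) : ℝ :=
  (1 - α)⁻¹ * ∫ u in Set.Ioo α 1, quantile μ Z u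

theorem ES_bound_and_attainment
    {Ω : Type*} [MeasurableSpace Ω] (μ : Measure Ω) [IsProbabilityMeasure μ]
    (L : Ω → ℝ) (hL : Measurable L) (hL01 : ∀ ω, L ω ∈ Set.Icc (0:ℝ) 1)
    (ℓ : ℝ) (hmean : ∫ ω, L ω ∂μ = ℓ)
    (U : Ω → ℝ) (hU : Measurable U)
    (hUnif : ∀ c ∈ Set.Icc (0:ℝ) 1, μ {ω | U ω ≤ c} = ENNReal.ofReal c)
    (α : ℝ) (hα : α ∈ Set.Ico (0:ℝ) 1) :
    ES μ L α ≤ (1 - α)⁻¹ * min (1 - α) ℓ ∧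
      ES μ (fun ω => if 1 - ℓ < U ω then (1:ℝ) else 0) α
        = (1 - α)⁻¹ * min (1 - α) ℓ := by
  obtain ⟨hα0, hα1⟩ := hα
  have hLnn : 0 ≤ᵐ[μ] L := Filter.Eventually.of_forall fun ω => (hL01 ω).1
  -- basic facts about ℓ
  have hℓeq : ℓ = (∫⁻ ω, ENNReal.ofReal (L ω) ∂μ).toReal := by
    rw [← hmean, integral_eq_lintegral_of_nonneg_ae hLnn hL.aestronglyMeasurable]
  have hBle : ∫⁻ ω, ENNReal.ofReal (L ω) ∂μ ≤ 1 := by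
    calc ∫⁻ ω, ENNReal.ofReal (L ω) ∂μ ≤ ∫⁻ _, 1 ∂μ :=
          lintegral_mono fun ω => by
            simpa using ENNReal.ofReal_le_one.mpr (hL01 ω).2
      _ = 1 := by simp
  have hBne : ∫⁻ ω, ENNReal.ofReal (L ω) ∂μ ≠ ⊤ :=
    (lt_of_le_of_lt hBle ENNReal.one_lt_top).ne
  have hℓ0 : 0 ≤ ℓ := hℓeq ▸ ENNReal.toReal_nonneg
  have hℓ1 : ℓ ≤ 1 := by
    rw [hℓeq]
    calc (∫⁻ ω, ENNReal.ofReal (L ω) ∂μ).toReal ≤ (1 : ENNReal).toReal :=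
          ENNReal.toReal_mono ENNReal.one_ne_top hBle
      _ = 1 := by simp
  ------------------------------------------------------------------
  -- Part 1: the upper bound
  ------------------------------------------------------------------
  set g : ℝ → ℝ := fun u => quantile μ L u with hg
  have hS1 : ∀ u : ℝ, u ≤ 1 → (1:ℝ) ∈ {x : ℝ | ENNReal.ofReal u ≤ μ {ω | L ω ≤ x}} := by
    intro u hu
    have : {ω | L ω ≤ 1} = Set.univ := by
      ext ω; simp [(hL01 ω).2]
    simp only [Set.mem_setOf_eq, this, measure_univ]
    exact ENNReal.ofReal_le_one.mpr hu
  have hSlb : ∀ u : ℝ, 0 < u → ∀ x ∈ {x : ℝ | ENNReal.ofReal u ≤ μ {ω | L ω ≤ x}},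
      (0:ℝ) ≤ x := by
    intro u hu x hx
    by_contra hxneg
    push_neg at hxneg
    have hempty : {ω | L ω ≤ x} = ∅ := by
      ext ω; simp only [Set.mem_setOf_eq, Set.mem_empty_iff_false, iff_false, not_le]
      exact lt_of_lt_of_le hxneg (hL01 ω).1
    rw [Set.mem_setOf_eq, hempty, measure_empty] at hx
    exact absurd hx (by simpa using (ENNReal.ofReal_pos.mpr hu).ne')
  have hq0 : ∀ u : ℝ, 0 < u → u ≤ 1 → 0 ≤ g u := fun u hu hu1 =>
    le_csInf ⟨1, hS1 u hu1⟩ (hSlb u hu)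
  have hq1 : ∀ u : ℝ, 0 < u → u ≤ 1 → g u ≤ 1 := fun u hu hu1 =>
    csInf_le ⟨0, hSlb u hu⟩ (hS1 u hu1)
  have hmono : MonotoneOn g (Set.Ioo α 1) := by
    intro u hu v hv huv
    apply csInf_le_csInf ⟨0, hSlb u (lt_of_le_of_lt hα0 hu.1)⟩ ⟨1, hS1 v hv.2.le⟩
    intro x hx
    exact le_trans (ENNReal.ofReal_le_ofReal huv) hx
  have hgae : AEMeasurable g (volume.restrict (Set.Ioo α 1)) :=
    aemeasurable_restrict_of_monotoneOn measurableSet_Ioo hmono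
  have hgnn : 0 ≤ᵐ[volume.restrict (Set.Ioo α 1)] g := by
    filter_upwards [ae_restrict_mem measurableSet_Ioo] with u hu
    exact hq0 u (lt_of_le_of_lt hα0 hu.1) hu.2.le
  have hint_eq : ∫ u in Set.Ioo α 1, g u
      = (∫⁻ u in Set.Ioo α 1, ENNReal.ofReal (g u)).toReal :=
    integral_eq_lintegral_of_nonneg_ae hgnn hgae.aestronglyMeasurable
  -- bound by 1 - α
  have hA_le : ∫⁻ u in Set.Ioo α 1, ENNReal.ofReal (g u) ≤ ENNReal.ofReal (1 - α) := by
    calc ∫⁻ u in Set.Ioo α 1, ENNReal.ofReal (g u)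
        ≤ ∫⁻ _ in Set.Ioo α 1, 1 := by
          apply lintegral_mono_ae
          filter_upwards [ae_restrict_mem measurableSet_Ioo] with u hu
          simpa using ENNReal.ofReal_le_one.mpr (hq1 u (lt_of_le_of_lt hα0 hu.1) hu.2.le)
      _ = ENNReal.ofReal (1 - α) := by simp [Real.volume_Ioo]
  have hAne : ∫⁻ u in Set.Ioo α 1, ENNReal.ofReal (g u) ≠ ⊤ :=
    (lt_of_le_of_lt hA_le ENNReal.ofReal_lt_top).ne
  have hbound1 : ∫ u in Set.Ioo α 1, g u ≤ 1 - α := by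
    rw [hint_eq]
    calc (∫⁻ u in Set.Ioo α 1, ENNReal.ofReal (g u)).toReal
        ≤ (ENNReal.ofReal (1 - α)).toReal :=
          ENNReal.toReal_mono ENNReal.ofReal_ne_top hA_le
      _ = 1 - α := ENNReal.toReal_ofReal (by linarith)
  -- bound by ℓ, via the layer cake formula
  have hlayer_g : ∫⁻ u in Set.Ioo α 1, ENNReal.ofReal (g u)
      = ∫⁻ t in Set.Ioi (0:ℝ), (volume.restrict (Set.Ioo α 1)) {u | t < g u} :=
    lintegral_eq_lintegral_meas_lt _ hgnn hgae
  have hlayer_L : ∫⁻ ω, ENNReal.ofReal (L ω) ∂μ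
      = ∫⁻ t in Set.Ioi (0:ℝ), μ {ω | t < L ω} :=
    lintegral_eq_lintegral_meas_lt μ hLnn hL.aemeasurable
  have hkey : ∀ t : ℝ, (volume.restrict (Set.Ioo α 1)) {u | t < g u} ≤ μ {ω | t < L ω} := by
    intro t
    have hincl : {u | t < g u} ∩ Set.Ioo α 1 ⊆ Set.Ioo ((μ {ω | L ω ≤ t}).toReal) 1 := by
      rintro u ⟨htu, hu⟩
      have hu0 : 0 < u := lt_of_le_of_lt hα0 hu.1
      have hnot : ¬ ENNReal.ofReal u ≤ μ {ω | L ω ≤ t} := by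
        intro hmem
        have : g u ≤ t := csInf_le ⟨0, hSlb u hu0⟩ hmem
        exact absurd htu (not_lt.mpr this)
      have hlt : μ {ω | L ω ≤ t} < ENNReal.ofReal u := lt_of_not_ge hnot
      exact ⟨(ENNReal.lt_ofReal_iff_toReal_lt (measure_ne_top μ _)).mp hlt, hu.2⟩
    have hcompl : μ {ω | t < L ω} = ENNReal.ofReal (1 - (μ {ω | L ω ≤ t}).toReal) := by
      have hms : MeasurableSet {ω | L ω ≤ t} := hL measurableSet_Iic
      have h1 : {ω | t < L ω} = {ω | L ω ≤ t}ᶜ := by ext ω; simp [not_le]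
      rw [h1, measure_compl hms (measure_ne_top μ _), measure_univ]
      rw [ENNReal.ofReal_sub _ ENNReal.toReal_nonneg,
        ENNReal.ofReal_toReal (measure_ne_top μ _), ENNReal.ofReal_one]
    calc (volume.restrict (Set.Ioo α 1)) {u | t < g u}
        = volume ({u | t < g u} ∩ Set.Ioo α 1) :=
          Measure.restrict_apply' measurableSet_Ioo
      _ ≤ volume (Set.Ioo ((μ {ω | L ω ≤ t}).toReal) 1) := measure_mono hincl
      _ = ENNReal.ofReal (1 - (μ {ω | L ω ≤ t}).toReal) := Real.volume_Ioo
      _ = μ {ω | t < L ω} := hcompl.symm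
  have hbound2 : ∫ u in Set.Ioo α 1, g u ≤ ℓ := by
    rw [hint_eq, hℓeq]
    apply ENNReal.toReal_mono hBne
    rw [hlayer_g, hlayer_L]
    exact lintegral_mono fun t => hkey t
  have h1α : (0:ℝ) ≤ (1 - α)⁻¹ := inv_nonneg.mpr (by linarith)
  constructor
  · exact mul_le_mul_of_nonneg_left (le_min hbound1 hbound2) h1α
  ------------------------------------------------------------------
  -- Part 2: attainment
  ------------------------------------------------------------------
  · set Lstar : Ω → ℝ := fun ω => if 1 - ℓ < U ω then (1:ℝ) else 0 with hLstar
    have hF0 : ∀ x : ℝ, x < 0 → μ {ω | Lstar ω ≤ x} = 0 := by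
      intro x hx
      have : {ω | Lstar ω ≤ x} = ∅ := by
        ext ω
        simp only [Set.mem_setOf_eq, Set.mem_empty_iff_false, iff_false, not_le, hLstar]
        split_ifs <;> linarith
      rw [this, measure_empty]
    have hFmid : ∀ x : ℝ, 0 ≤ x → x < 1 → μ {ω | Lstar ω ≤ x} = ENNReal.ofReal (1 - ℓ) := by
      intro x hx0 hx1
      have hset : {ω | Lstar ω ≤ x} = {ω | U ω ≤ 1 - ℓ} := by
        ext ω
        simp only [Set.mem_setOf_eq, hLstar]
        split_ifs with h
        · constructor
          · intro h'; linarith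
          · intro h'; linarith
        · push_neg at h
          constructor
          · intro _; exact h
          · intro _; exact hx0
      rw [hset, hUnif (1 - ℓ) ⟨by linarith, by linarith⟩]
    have hF1 : ∀ x : ℝ, 1 ≤ x → μ {ω | Lstar ω ≤ x} = 1 := by
      intro x hx
      have : {ω | Lstar ω ≤ x} = Set.univ := by
        ext ω
        simp only [Set.mem_setOf_eq, Set.mem_univ, iff_true, hLstar]
        split_ifs <;> linarith
      rw [this, measure_univ]
    have hqstar : ∀ u ∈ Set.Ioo α 1,
        quantile μ Lstar u = if 1 - ℓ < u then 1 else 0 := by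
      intro u hu
      have hu0 : 0 < u := lt_of_le_of_lt hα0 hu.1
      split_ifs with hcase
      · -- u > 1 - ℓ : quantile is 1
        have hmem : (1:ℝ) ∈ {x : ℝ | ENNReal.ofReal u ≤ μ {ω | Lstar ω ≤ x}} := by
          rw [Set.mem_setOf_eq, hF1 1 le_rfl]
          exact ENNReal.ofReal_le_one.mpr hu.2.le
        have hlb : ∀ x ∈ {x : ℝ | ENNReal.ofReal u ≤ μ {ω | Lstar ω ≤ x}}, (1:ℝ) ≤ x := by
          intro x hx
          by_contra hxlt
          push_neg at hxlt
          rw [Set.mem_setOf_eq] at hx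
          rcases lt_or_ge x 0 with h | h
          · rw [hF0 x h] at hx
            exact absurd hx (by simpa using (ENNReal.ofReal_pos.mpr hu0).ne')
          · rw [hFmid x h hxlt] at hx
            exact absurd hx (not_le.mpr ((ENNReal.ofReal_lt_ofReal_iff hu0).mpr hcase))
        exact le_antisymm (csInf_le ⟨1, hlb⟩ hmem) (le_csInf ⟨1, hmem⟩ hlb)
      · -- u ≤ 1 - ℓ : quantile is 0
        push_neg at hcase
        have hmem : (0:ℝ) ∈ {x : ℝ | ENNReal.ofReal u ≤ μ {ω | Lstar ω ≤ x}} := by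
          rw [Set.mem_setOf_eq, hFmid 0 le_rfl one_pos]
          exact ENNReal.ofReal_le_ofReal hcase
        have hlb : ∀ x ∈ {x : ℝ | ENNReal.ofReal u ≤ μ {ω | Lstar ω ≤ x}}, (0:ℝ) ≤ x := by
          intro x hx
          by_contra hxlt
          push_neg at hxlt
          rw [Set.mem_setOf_eq, hF0 x hxlt] at hx
          exact absurd hx (by simpa using (ENNReal.ofReal_pos.mpr hu0).ne')
        exact le_antisymm (csInf_le ⟨0, hlb⟩ hmem) (le_csInf ⟨0, hmem⟩ hlb)
    have hcongr : ∫ u in Set.Ioo α 1, quantile μ Lstar u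
        = ∫ u in Set.Ioo α 1, (Set.Ioi (1 - ℓ)).indicator (fun _ => (1:ℝ)) u := by
      apply setIntegral_congr_fun measurableSet_Ioo
      intro u hu
      rw [hqstar u hu, Set.indicator_apply]
      simp [Set.mem_Ioi]
    have hmax1 : max α (1 - ℓ) ≤ 1 := max_le hα1.le (by linarith)
    have hval : ∫ u in Set.Ioo α 1, quantile μ Lstar u = 1 - max α (1 - ℓ) := by
      rw [hcongr, setIntegral_indicator measurableSet_Ioi, Set.Ioo_inter_Ioi,
        setIntegral_const, Real.volume_real_Ioo_of_le hmax1, smul_eq_mul, mul_one]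
    have hminmax : 1 - max α (1 - ℓ) = min (1 - α) ℓ := by
      rcases le_total α (1 - ℓ) with h | h
      · rw [max_eq_right h, min_eq_right (by linarith : ℓ ≤ 1 - α)]; ring
      · rw [max_eq_left h, min_eq_left (by linarith : 1 - α ≤ ℓ)]
    show (1 - α)⁻¹ * ∫ u in Set.Ioo α 1, quantile μ Lstar u = (1 - α)⁻¹ * min (1 - α) ℓ
    rw [hval, hminmax]
end

section
/- Given the equivalence between increasing convex order via stop-loss transforms and via expected shortfall: for integrable random variables S and S* with E[S] = E[S*], the condition E[(S - κ)^+] ≤ E[(S* - κ)^+] for all κ ∈ ℝ holds if and only if ES_α(S) ≤ ES_α(S*) for all α ∈ [0,1). -/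
open MeasureTheory

set_option linter.unusedSectionVars false
open Set Filter Topology
open scoped ENNReal

section Aux

variable {Ω : Type*} [MeasurableSpace Ω] {μ : Measure Ω} [IsProbabilityMeasure μ]
  {Z : Ω → ℝ}

lemma cdfSet_meas (hZ : Measurable Z) (x : ℝ) : MeasurableSet {ω | Z ω ≤ x} :=
  hZ measurableSet_Iic

/-- right continuity of the cdf, in limsup form -/
lemma cdf_right_cont (hZ : Measurable Z) {c : ℝ≥0∞} {x : ℝ}
    (h : ∀ ε : ℝ, 0 < ε → c ≤ μ {ω | Z ω ≤ x + ε}) : c ≤ μ {ω | Z ω ≤ x} := by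
  have hi : (⋂ n : ℕ, {ω | Z ω ≤ x + 1/(n+1)}) = {ω | Z ω ≤ x} := by
    ext ω
    simp only [mem_iInter, mem_setOf_eq]
    constructor
    · intro hω
      by_contra hlt
      push_neg at hlt
      obtain ⟨n, hn⟩ := exists_nat_one_div_lt (sub_pos.2 hlt)
      have := hω n
      linarith
    · intro hω n
      have : (0:ℝ) < 1/(n+1) := by positivity
      linarith
  have hT : Tendsto (fun n : ℕ => μ {ω | Z ω ≤ x + 1/(n+1)}) atTop
      (𝓝 (μ (⋂ n : ℕ, {ω | Z ω ≤ x + 1/(n+1)}))) := by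
    apply tendsto_measure_iInter_atTop
    · exact fun n => (cdfSet_meas hZ _).nullMeasurableSet
    · intro n m hnm ω hω
      simp only [mem_setOf_eq] at hω ⊢
      have h1 : (1:ℝ)/(m+1) ≤ 1/(n+1) := by
        apply one_div_le_one_div_of_le (by positivity)
        exact_mod_cast by omega
      linarith
    · exact ⟨0, measure_ne_top μ _⟩
  rw [← hi]
  exact ge_of_tendsto' hT fun n => h _ (by positivity)

lemma quantile_le_iff (hZ : Measurable Z) {u : ℝ} (hu0 : 0 < u) (hu1 : u < 1) (x : ℝ) :
    quantile μ Z u ≤ x ↔ ENNReal.ofReal u ≤ μ {ω | Z ω ≤ x} := by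
  set Su := {y : ℝ | ENNReal.ofReal u ≤ μ {ω | Z ω ≤ y}} with hSu
  have hup : ∀ y ∈ Su, ∀ y', y ≤ y' → y' ∈ Su := by
    intro y hy y' hyy'
    exact le_trans hy (measure_mono fun ω hω => le_trans hω hyy')
  have hne : Su.Nonempty := by
    have hU : (⋃ n : ℕ, {ω | Z ω ≤ (n:ℝ)}) = univ := by
      ext ω; simp only [mem_iUnion, mem_setOf_eq, mem_univ, iff_true]
      exact exists_nat_ge (Z ω)
    have hT : Tendsto (fun n : ℕ => μ {ω | Z ω ≤ (n:ℝ)}) atTop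
        (𝓝 (μ (⋃ n : ℕ, {ω | Z ω ≤ (n:ℝ)}))) := by
      apply tendsto_measure_iUnion_atTop
      intro n m hnm ω hω
      simp only [mem_setOf_eq] at hω ⊢
      exact le_trans hω (by exact_mod_cast hnm)
    rw [hU, measure_univ] at hT
    have hlt : ENNReal.ofReal u < 1 := by
      rw [← ENNReal.ofReal_one]
      exact (ENNReal.ofReal_lt_ofReal_iff one_pos).2 hu1
    obtain ⟨n, hn⟩ := (hT.eventually (eventually_gt_nhds hlt)).exists
    exact ⟨n, hn.le⟩
  have hbdd : BddBelow Su := by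
    have hI : (⋂ n : ℕ, {ω | Z ω ≤ -(n:ℝ)}) = (∅ : Set Ω) := by
      ext ω; simp only [mem_iInter, mem_setOf_eq, mem_empty_iff_false, iff_false, not_forall]
      obtain ⟨n, hn⟩ := exists_nat_gt (-Z ω)
      exact ⟨n, by push_neg; linarith⟩
    have hT : Tendsto (fun n : ℕ => μ {ω | Z ω ≤ -(n:ℝ)}) atTop
        (𝓝 (μ (⋂ n : ℕ, {ω | Z ω ≤ -(n:ℝ)}))) := by
      apply tendsto_measure_iInter_atTop
      · exact fun n => (cdfSet_meas hZ _).nullMeasurableSet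
      · intro n m hnm ω hω
        simp only [mem_setOf_eq] at hω ⊢
        have : (n:ℝ) ≤ m := by exact_mod_cast hnm
        linarith
      · exact ⟨0, measure_ne_top μ _⟩
    rw [hI, measure_empty] at hT
    have hpos : (0:ℝ≥0∞) < ENNReal.ofReal u := ENNReal.ofReal_pos.2 hu0
    obtain ⟨n, hn⟩ := (hT.eventually (eventually_lt_nhds hpos)).exists
    refine ⟨-(n:ℝ), fun y hy => ?_⟩
    by_contra hlt
    push_neg at hlt
    exact absurd (le_trans hy (measure_mono fun ω hω => le_trans hω hlt.le)) (not_le.2 hn)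
  constructor
  · intro h
    apply cdf_right_cont hZ
    intro ε hε
    have hlt : sInf Su < x + ε := lt_of_le_of_lt h (lt_add_of_pos_right x hε)
    obtain ⟨y, hySu, hyx⟩ := exists_lt_of_csInf_lt hne hlt
    exact hup y hySu _ hyx.le
  · intro h
    exact csInf_le hbdd h

lemma quantile_self (hZ : Measurable Z) {u : ℝ} (hu0 : 0 < u) (hu1 : u < 1) :
    ENNReal.ofReal u ≤ μ {ω | Z ω ≤ quantile μ Z u} :=
  (quantile_le_iff hZ hu0 hu1 _).1 le_rfl

lemma quantile_monoOn (hZ : Measurable Z) : MonotoneOn (quantile μ Z) (Ioo (0:ℝ) 1) := by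
  intro u hu v hv huv
  rw [quantile_le_iff hZ hu.1 hu.2]
  exact le_trans (ENNReal.ofReal_le_ofReal huv) (quantile_self hZ hv.1 hv.2)

lemma quantile_of_nonpos {u : ℝ} (hu : u ≤ 0) : quantile μ Z u = 0 := by
  have : {x : ℝ | ENNReal.ofReal u ≤ μ {ω | Z ω ≤ x}} = univ := by
    ext x; simp [ENNReal.ofReal_of_nonpos hu]
  rw [quantile, this]
  exact Real.sInf_of_not_bddBelow not_bddBelow_univ

lemma quantile_of_one_lt {u : ℝ} (hu : 1 < u) : quantile μ Z u = 0 := by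
  have : {x : ℝ | ENNReal.ofReal u ≤ μ {ω | Z ω ≤ x}} = ∅ := by
    ext x
    simp only [mem_setOf_eq, mem_empty_iff_false, iff_false, not_le]
    calc μ {ω | Z ω ≤ x} ≤ 1 := prob_le_one
    _ < ENNReal.ofReal u := by
        rw [← ENNReal.ofReal_one]
        exact (ENNReal.ofReal_lt_ofReal_iff (by linarith)).2 hu
  rw [quantile, this, Real.sInf_empty]

lemma preimage_inter_Ioo (hZ : Measurable Z) (x : ℝ) :
    quantile μ Z ⁻¹' Iic x ∩ Ioo (0:ℝ) 1 = Iic ((μ {ω | Z ω ≤ x}).toReal) ∩ Ioo 0 1 := by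
  have hne : μ {ω | Z ω ≤ x} ≠ ⊤ := measure_ne_top μ _
  ext u
  simp only [mem_inter_iff, mem_preimage, mem_Iic, mem_Ioo]
  constructor
  · rintro ⟨hqx, hu0, hu1⟩
    exact ⟨(ENNReal.ofReal_le_iff_le_toReal hne).1 ((quantile_le_iff hZ hu0 hu1 x).1 hqx),
      hu0, hu1⟩
  · rintro ⟨hut, hu0, hu1⟩
    exact ⟨(quantile_le_iff hZ hu0 hu1 x).2 ((ENNReal.ofReal_le_iff_le_toReal hne).2 hut),
      hu0, hu1⟩

lemma measurable_quantile (hZ : Measurable Z) : Measurable (quantile μ Z) := by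
  apply measurable_of_Iic
  intro x
  have hdecomp : quantile μ Z ⁻¹' Iic x
      = (quantile μ Z ⁻¹' Iic x ∩ Ioo 0 1) ∪ ((quantile μ Z ⁻¹' Iic x ∩ Iic 0)
        ∪ ((quantile μ Z ⁻¹' Iic x ∩ Ioi 1) ∪ (quantile μ Z ⁻¹' Iic x ∩ {1}))) := by
    rw [← inter_union_distrib_left, ← inter_union_distrib_left, ← inter_union_distrib_left]
    rw [eq_comm, inter_eq_left]
    intro u _
    rcases lt_trichotomy u 1 with h | h | h
    · rcases le_or_gt u 0 with h0 | h0
      · exact Or.inr (Or.inl h0)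
      · exact Or.inl ⟨h0, h⟩
    · exact Or.inr (Or.inr (Or.inr h))
    · exact Or.inr (Or.inr (Or.inl h))
  rw [hdecomp, preimage_inter_Ioo hZ]
  have h2 : quantile μ Z ⁻¹' Iic x ∩ Iic 0 = (if 0 ≤ x then Iic (0:ℝ) else ∅) := by
    ext u
    simp only [mem_inter_iff, mem_preimage, mem_Iic]
    by_cases hx : 0 ≤ x <;> simp only [hx, if_true, if_false, mem_Iic, mem_empty_iff_false]
    · constructor
      · exact fun h => h.2
      · intro h; rw [quantile_of_nonpos (μ := μ) (Z := Z) h]; exact ⟨hx, h⟩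
    · refine ⟨fun h => ?_, False.elim⟩
      rw [quantile_of_nonpos (μ := μ) (Z := Z) h.2] at h
      exact hx h.1
  have h3 : quantile μ Z ⁻¹' Iic x ∩ Ioi 1 = (if 0 ≤ x then Ioi (1:ℝ) else ∅) := by
    ext u
    simp only [mem_inter_iff, mem_preimage, mem_Iic]
    by_cases hx : 0 ≤ x <;> simp only [hx, if_true, if_false, mem_Ioi, mem_empty_iff_false]
    · constructor
      · exact fun h => h.2
      · intro h; rw [quantile_of_one_lt (μ := μ) (Z := Z) h]; exact ⟨hx, h⟩
    · refine ⟨fun h => ?_, False.elim⟩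
      rw [quantile_of_one_lt (μ := μ) (Z := Z) h.2] at h
      exact hx h.1
  rw [h2, h3]
  refine (measurableSet_Iic.inter measurableSet_Ioo).union (MeasurableSet.union ?_
    (MeasurableSet.union ?_ (subsingleton_singleton.anti inter_subset_right).measurableSet))
  · split <;> [exact measurableSet_Iic; exact MeasurableSet.empty]
  · split <;> [exact measurableSet_Ioi; exact MeasurableSet.empty]

lemma map_quantile_eq (hZ : Measurable Z) :
    Measure.map (quantile μ Z) (volume.restrict (Ioo (0:ℝ) 1)) = Measure.map Z μ := by
  have hQ : Measurable (quantile μ Z) := measurable_quantile hZ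
  haveI hP : IsProbabilityMeasure (volume.restrict (Ioo (0:ℝ) 1)) := by
    constructor
    rw [Measure.restrict_apply_univ, Real.volume_Ioo]
    norm_num
  haveI := Measure.isProbabilityMeasure_map (μ := volume.restrict (Ioo (0:ℝ) 1)) hQ.aemeasurable
  refine Measure.ext_of_Iic _ _ fun x => ?_
  rw [Measure.map_apply hQ measurableSet_Iic, Measure.map_apply hZ measurableSet_Iic,
    Measure.restrict_apply (hQ measurableSet_Iic), preimage_inter_Ioo hZ]
  have hne : μ {ω | Z ω ≤ x} ≠ ⊤ := measure_ne_top μ _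
  set t := (μ {ω | Z ω ≤ x}).toReal with ht
  have h0t : 0 ≤ t := ENNReal.toReal_nonneg
  have hle1 : t ≤ 1 := by
    rw [ht]
    exact ENNReal.toReal_le_of_le_ofReal one_pos.le (by simpa using prob_le_one)
  have hgoal : Z ⁻¹' Iic x = {ω | Z ω ≤ x} := rfl
  rw [hgoal, ← ENNReal.ofReal_toReal hne, ← ht]
  rcases lt_or_ge t 1 with h | h
  · have : Iic t ∩ Ioo (0: ℝ) 1 = Ioc 0 t := by
      ext u
      simp only [mem_inter_iff, mem_Iic, mem_Ioo, mem_Ioc]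
      constructor
      · rintro ⟨h1, h2, _⟩; exact ⟨h2, h1⟩
      · rintro ⟨h1, h2⟩; exact ⟨h2, h1, lt_of_le_of_lt h2 h⟩
    rw [this, Real.volume_Ioc, sub_zero]
  · have ht1 : t = 1 := le_antisymm hle1 h
    have : Iic t ∩ Ioo (0:ℝ) 1 = Ioo 0 1 := by
      rw [inter_eq_right]
      exact fun u hu => le_of_lt (lt_of_lt_of_le hu.2 (ht1.symm ▸ le_refl 1))
    rw [this, Real.volume_Ioo, ht1, sub_zero]

lemma integral_comp_quantile (hZ : Measurable Z) {f : ℝ → ℝ} (hf : Measurable f) :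
    ∫ u in Ioo (0:ℝ) 1, f (quantile μ Z u) = ∫ ω, f (Z ω) ∂μ := by
  rw [← integral_map (measurable_quantile hZ).aemeasurable hf.aestronglyMeasurable,
    map_quantile_eq hZ, integral_map hZ.aemeasurable hf.aestronglyMeasurable]

lemma integrableOn_comp_quantile (hZ : Measurable Z) {f : ℝ → ℝ} (hf : Measurable f)
    (hint : Integrable (fun ω => f (Z ω)) μ) :
    IntegrableOn (fun u => f (quantile μ Z u)) (Ioo (0:ℝ) 1) := by
  have h1 : Integrable f (Measure.map Z μ) :=
    (integrable_map_measure hf.aestronglyMeasurable hZ.aemeasurable).2 hint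
  rw [← map_quantile_eq hZ] at h1
  exact (integrable_map_measure hf.aestronglyMeasurable
    (measurable_quantile hZ).aemeasurable).1 h1

-- derived facts
lemma integrableOn_quantile (hZ : Measurable Z) (hint : Integrable Z μ) :
    IntegrableOn (quantile μ Z) (Ioo (0:ℝ) 1) := by
  simpa using integrableOn_comp_quantile hZ measurable_id (by simpa using hint)

lemma integrableOn_maxsub (hZ : Measurable Z) (hint : Integrable Z μ) (κ : ℝ) :
    IntegrableOn (fun u => max (quantile μ Z u - κ) 0) (Ioo (0:ℝ) 1) := by
  have hf : Measurable (fun x : ℝ => max (x - κ) 0) := by fun_prop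
  have h : Integrable (fun ω => max (Z ω - κ) 0) μ := (hint.sub (integrable_const κ)).pos_part
  exact integrableOn_comp_quantile hZ (f := fun x : ℝ => max (x - κ) 0) hf h

lemma integral_quantile_eq_mean (hZ : Measurable Z) :
    ∫ u in Ioo (0:ℝ) 1, quantile μ Z u = ∫ ω, Z ω ∂μ := by
  simpa using integral_comp_quantile hZ measurable_id

lemma integral_maxsub_eq (hZ : Measurable Z) (κ : ℝ) :
    ∫ u in Ioo (0:ℝ) 1, max (quantile μ Z u - κ) 0 = ∫ ω, max (Z ω - κ) 0 ∂μ := by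
  have hf : Measurable (fun x : ℝ => max (x - κ) 0) := by fun_prop
  exact integral_comp_quantile hZ (f := fun x : ℝ => max (x - κ) 0) hf

lemma integral_sub_const (hZ : Measurable Z) (hint : Integrable Z μ) {α : ℝ}
    (hα : α ∈ Set.Ico (0:ℝ) 1) (κ : ℝ) :
    ∫ u in Ioo α 1, (quantile μ Z u - κ) =
      (∫ u in Ioo α 1, quantile μ Z u) - (1 - α) * κ := by
  have hsub : Ioo α 1 ⊆ Ioo (0:ℝ) 1 := Ioo_subset_Ioo hα.1 le_rfl
  rw [integral_sub ((integrableOn_quantile hZ hint).mono_set hsub)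
    (integrableOn_const (by rw [Real.volume_Ioo]; exact ENNReal.ofReal_ne_top))]
  rw [setIntegral_const, measureReal_def, Real.volume_Ioo, ENNReal.toReal_ofReal (by linarith [hα.2]),
    smul_eq_mul]

lemma integral_sub_le_maxsub (hZ : Measurable Z) (hint : Integrable Z μ) {α : ℝ}
    (hα : α ∈ Set.Ico (0:ℝ) 1) (κ : ℝ) :
    ∫ u in Ioo α 1, (quantile μ Z u - κ) ≤
      ∫ u in Ioo (0:ℝ) 1, max (quantile μ Z u - κ) 0 := by
  have hsub : Ioo α 1 ⊆ Ioo (0:ℝ) 1 := Ioo_subset_Ioo hα.1 le_rfl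
  calc ∫ u in Ioo α 1, (quantile μ Z u - κ)
      ≤ ∫ u in Ioo α 1, max (quantile μ Z u - κ) 0 := by
        apply setIntegral_mono_on
          (((integrableOn_quantile hZ hint).mono_set hsub).sub
            (integrableOn_const (by rw [Real.volume_Ioo]; exact ENNReal.ofReal_ne_top)))
          ((integrableOn_maxsub hZ hint κ).mono_set hsub) measurableSet_Ioo
        exact fun u _ => le_max_left _ _
    _ ≤ ∫ u in Ioo (0:ℝ) 1, max (quantile μ Z u - κ) 0 :=
        setIntegral_mono_set (integrableOn_maxsub hZ hint κ)
          (Eventually.of_forall fun u => le_max_right _ _)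
          (HasSubset.Subset.eventuallyLE hsub)

lemma integral_maxsub_eq_integral_sub (hZ : Measurable Z) (hint : Integrable Z μ) {α κ : ℝ}
    (hα : α ∈ Set.Ioo (0:ℝ) 1)
    (h1 : ∀ u ∈ Set.Ioo (0:ℝ) α, quantile μ Z u ≤ κ)
    (h2 : ∀ u ∈ Set.Ioo α 1, κ ≤ quantile μ Z u) :
    ∫ u in Ioo (0:ℝ) 1, max (quantile μ Z u - κ) 0 =
      ∫ u in Ioo α 1, (quantile μ Z u - κ) := by
  have hsub : Ioo α 1 ⊆ Ioo (0:ℝ) 1 := Ioo_subset_Ioo hα.1.le le_rfl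
  have hdisj : Disjoint (Ioc (0:ℝ) α) (Ioo α 1) := by
    rw [disjoint_left]
    rintro u hu hv
    exact absurd hv.1 (not_lt.2 hu.2)
  rw [← Ioc_union_Ioo_eq_Ioo hα.1.le hα.2,
    setIntegral_union hdisj measurableSet_Ioo
      ((integrableOn_maxsub hZ hint κ).mono_set
        (fun u hu => ⟨hu.1, lt_of_le_of_lt hu.2 hα.2⟩))
      ((integrableOn_maxsub hZ hint κ).mono_set hsub)]
  have hz : ∫ u in Ioc (0:ℝ) α, max (quantile μ Z u - κ) 0 = 0 := by
    rw [integral_Ioc_eq_integral_Ioo,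
      setIntegral_congr_fun (g := fun _ => (0:ℝ)) measurableSet_Ioo
        (fun u hu => max_eq_right (sub_nonpos.2 (h1 u hu))), integral_zero]
  rw [hz, zero_add]
  exact setIntegral_congr_fun measurableSet_Ioo
    (fun u hu => max_eq_left (sub_nonneg.2 (h2 u hu)))

end Aux

theorem stop_loss_iff_expected_shortfall
    {Ω : Type*} [MeasurableSpace Ω] (μ : Measure Ω) [IsProbabilityMeasure μ]
    (S Sstar : Ω → ℝ) (hSmeas : Measurable S) (hSstarmeas : Measurable Sstar)
    (hS : Integrable S μ) (hSstar : Integrable Sstar μ)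
    (hmean : ∫ ω, S ω ∂μ = ∫ ω, Sstar ω ∂μ) :
    (∀ κ : ℝ, ∫ ω, max (S ω - κ) 0 ∂μ ≤ ∫ ω, max (Sstar ω - κ) 0 ∂μ) ↔
      (∀ α ∈ Set.Ico (0:ℝ) 1, ES μ S α ≤ ES μ Sstar α) := by
  constructor
  · intro hSL α hα
    rcases eq_or_lt_of_le hα.1 with h0 | h0
    · -- α = 0
      rw [ES, ES, ← h0, integral_quantile_eq_mean hSmeas, integral_quantile_eq_mean hSstarmeas,
        hmean]
    · -- 0 < α < 1
      have hαIoo : α ∈ Set.Ioo (0:ℝ) 1 := ⟨h0, hα.2⟩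
      set κ := quantile μ Sstar α with hκ
      have h1 : ∀ u ∈ Set.Ioo (0:ℝ) α, quantile μ Sstar u ≤ κ := fun u hu =>
        quantile_monoOn hSstarmeas ⟨hu.1, hu.2.trans hα.2⟩ hαIoo hu.2.le
      have h2 : ∀ u ∈ Set.Ioo α 1, κ ≤ quantile μ Sstar u := fun u hu =>
        quantile_monoOn hSstarmeas hαIoo ⟨h0.trans hu.1, hu.2⟩ hu.1.le
      have keyStar : ∫ u in Ioo α 1, quantile μ Sstar u =
          (∫ u in Ioo (0:ℝ) 1, max (quantile μ Sstar u - κ) 0) + (1 - α) * κ := by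
        have e := integral_maxsub_eq_integral_sub hSstarmeas hSstar hαIoo h1 h2
        rw [integral_sub_const hSstarmeas hSstar hα κ] at e
        linarith
      have keyS : ∫ u in Ioo α 1, quantile μ S u ≤
          (∫ u in Ioo (0:ℝ) 1, max (quantile μ S u - κ) 0) + (1 - α) * κ := by
        have e := integral_sub_le_maxsub hSmeas hS hα κ
        rw [integral_sub_const hSmeas hS hα κ] at e
        linarith
      have hcmp : ∫ u in Ioo (0:ℝ) 1, max (quantile μ S u - κ) 0 ≤
          ∫ u in Ioo (0:ℝ) 1, max (quantile μ Sstar u - κ) 0 := by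
        rw [integral_maxsub_eq hSmeas κ, integral_maxsub_eq hSstarmeas κ]
        exact hSL κ
      rw [ES, ES]
      apply mul_le_mul_of_nonneg_left _ (inv_nonneg.2 (by linarith [hα.2]))
      linarith
  · intro hES κ
    set A := {u : ℝ | u ∈ Set.Ioo (0:ℝ) 1 ∧ quantile μ S u ≤ κ} with hA
    rcases A.eq_empty_or_nonempty with hAe | hAn
    · have hall : ∀ u ∈ Set.Ioo (0:ℝ) 1, max (quantile μ S u - κ) 0 = quantile μ S u - κ := by
        intro u hu
        refine max_eq_left (sub_nonneg.2 (le_of_not_gt fun hlt => ?_))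
        have huA : u ∈ A := ⟨hu, hlt.le⟩
        rw [hAe] at huA
        exact notMem_empty u huA
      have e0 : (0:ℝ) ∈ Set.Ico (0:ℝ) 1 := ⟨le_rfl, one_pos⟩
      calc ∫ ω, max (S ω - κ) 0 ∂μ
          = ∫ u in Ioo (0:ℝ) 1, max (quantile μ S u - κ) 0 := (integral_maxsub_eq hSmeas κ).symm
        _ = ∫ u in Ioo (0:ℝ) 1, (quantile μ S u - κ) :=
            setIntegral_congr_fun measurableSet_Ioo hall
        _ = (∫ u in Ioo (0:ℝ) 1, quantile μ S u) - (1 - 0) * κ :=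
            integral_sub_const hSmeas hS e0 κ
        _ = (∫ ω, S ω ∂μ) - κ := by rw [integral_quantile_eq_mean hSmeas]; ring
        _ = (∫ ω, Sstar ω ∂μ) - κ := by rw [hmean]
        _ = ∫ ω, (Sstar ω - κ) ∂μ := by
            rw [integral_sub hSstar (integrable_const κ), integral_const, probReal_univ]
            simp
        _ ≤ ∫ ω, max (Sstar ω - κ) 0 ∂μ :=
            integral_mono (hSstar.sub (integrable_const κ))
              ((hSstar.sub (integrable_const κ)).pos_part) (fun ω => le_max_left _ _)
    · have hbddA : BddAbove A := bddAbove_Ioo.mono (fun u hu => hu.1)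
      obtain ⟨u0, hu0⟩ := id hAn
      set a := sSup A with ha
      have ha0 : 0 < a := lt_of_lt_of_le hu0.1.1 (le_csSup hbddA hu0)
      have ha1 : a ≤ 1 := csSup_le hAn (fun u hu => hu.1.2.le)
      have hbelow : ∀ u ∈ Set.Ioo (0:ℝ) 1, u < a → quantile μ S u ≤ κ := by
        intro u hu hua
        obtain ⟨v, hvA, huv⟩ := exists_lt_of_lt_csSup hAn hua
        exact le_trans (quantile_monoOn hSmeas hu hvA.1 huv.le) hvA.2
      rcases eq_or_lt_of_le ha1 with ha1' | ha1'
      · -- a = 1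
        have hz : ∫ ω, max (S ω - κ) 0 ∂μ = 0 := by
          rw [← integral_maxsub_eq hSmeas κ,
            setIntegral_congr_fun (g := fun _ => (0:ℝ)) measurableSet_Ioo
              (fun u hu => max_eq_right (sub_nonpos.2 (hbelow u hu (ha1' ▸ hu.2)))),
            integral_zero]
        rw [hz]
        exact integral_nonneg fun ω => le_max_right _ _
      · -- 0 < a < 1
        have haIoo : a ∈ Set.Ioo (0:ℝ) 1 := ⟨ha0, ha1'⟩
        have haIco : a ∈ Set.Ico (0:ℝ) 1 := ⟨ha0.le, ha1'⟩
        have habove : ∀ u ∈ Set.Ioo a 1, κ ≤ quantile μ S u := by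
          intro u hu
          by_contra hlt
          push_neg at hlt
          have huA : u ∈ A := ⟨⟨ha0.trans hu.1, hu.2⟩, hlt.le⟩
          exact absurd (le_csSup hbddA huA) (not_le.2 hu.1)
        have e1 : ∫ ω, max (S ω - κ) 0 ∂μ =
            (∫ u in Ioo a 1, quantile μ S u) - (1 - a) * κ := by
          rw [← integral_maxsub_eq hSmeas κ,
            integral_maxsub_eq_integral_sub hSmeas hS haIoo
              (fun u hu => hbelow u ⟨hu.1, hu.2.trans ha1'⟩ hu.2) habove,
            integral_sub_const hSmeas hS haIco κ]
        have e2 : (∫ u in Ioo a 1, quantile μ S u) ≤ ∫ u in Ioo a 1, quantile μ Sstar u := by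
          have h := hES a haIco
          rw [ES, ES] at h
          exact le_of_mul_le_mul_left h (inv_pos.2 (by linarith))
        have e3 : (∫ u in Ioo a 1, quantile μ Sstar u) - (1 - a) * κ ≤
            ∫ ω, max (Sstar ω - κ) 0 ∂μ := by
          rw [← integral_maxsub_eq hSstarmeas κ]
          have e := integral_sub_le_maxsub hSstarmeas hSstar haIco κ
          rw [integral_sub_const hSstarmeas hSstar haIco κ] at e
          linarith
        linarith
end

section
/- For a one-dimensional CIR-type Riccati equation ∂_t β(t) = -κ β(t) + (σ²/2) β(t)² - a with β(0) = -u, where κ, σ > 0, a ≥ 0, u ≥ 0, the solution β(t) exists for all t ≥ 0 and satisfies β(t) ≤ 0 for all t ≥ 0. -/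
theorem riccati_cir_global_nonpositive_solution
    (κ σ a u : ℝ) (hκ : 0 < κ) (hσ : 0 < σ) (ha : 0 ≤ a) (hu : 0 ≤ u) :
    ∃ β : ℝ → ℝ, β 0 = -u ∧
      (∀ t ≥ (0:ℝ), HasDerivAt β (-κ * β t + σ ^ 2 / 2 * (β t) ^ 2 - a) t) ∧
      ∀ t ≥ (0:ℝ), β t ≤ 0 := by
  have hσ2 : (0:ℝ) < σ ^ 2 := by positivity
  set γ : ℝ := Real.sqrt (κ ^ 2 + 2 * a * σ ^ 2) with hγdef
  have hγ2 : γ ^ 2 = κ ^ 2 + 2 * a * σ ^ 2 := Real.sq_sqrt (by positivity)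
  have hγ0 : 0 ≤ γ := Real.sqrt_nonneg _
  have hγκ : κ ≤ γ := by nlinarith
  have hγpos : 0 < γ := lt_of_lt_of_le hκ hγκ
  set lp : ℝ := (γ - κ) / 2 with hlpdef
  set lm : ℝ := -(γ + κ) / 2 with hlmdef
  set m : ℝ := u * σ ^ 2 / 2 with hmdef
  have hm : 0 ≤ m := by positivity
  have hmu : m = u * σ ^ 2 / 2 := hmdef
  have hlp : 0 ≤ lp := by simp only [hlpdef]; linarith
  set A : ℝ := (m - lm) / γ with hAdef
  set B : ℝ := (lp - m) / γ with hBdef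
  have hA : 0 ≤ A := by
    apply div_nonneg _ hγpos.le
    simp only [hlmdef]; linarith
  have hAB : A + B = 1 := by
    simp only [hAdef, hBdef, hlpdef, hlmdef]
    field_simp
    ring
  have hABm : A * lp + B * lm = m := by
    simp only [hAdef, hBdef, hlpdef, hlmdef]
    field_simp
    ring
  set w : ℝ → ℝ := fun t => A * Real.exp (lp * t) + B * Real.exp (lm * t) with hwdef
  set w1 : ℝ → ℝ := fun t => A * lp * Real.exp (lp * t) + B * lm * Real.exp (lm * t)
    with hw1def
  set w2 : ℝ → ℝ := fun t => A * lp ^ 2 * Real.exp (lp * t) + B * lm ^ 2 * Real.exp (lm * t)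
    with hw2def
  -- exponent splitting : lp * t = lm * t + γ * t
  have hsplit : ∀ t : ℝ, Real.exp (lp * t) = Real.exp (lm * t) * Real.exp (γ * t) := by
    intro t
    rw [← Real.exp_add]
    congr 1
    simp only [hlpdef, hlmdef]; ring
  -- positivity of w on [0,∞)
  have hwpos : ∀ t : ℝ, 0 ≤ t → 0 < w t := by
    intro t ht
    have h2 : 1 ≤ Real.exp (γ * t) := Real.one_le_exp (by positivity)
    have h3 : 0 < Real.exp (lm * t) := Real.exp_pos _
    have h4 : 0 ≤ A * Real.exp (lm * t) * (Real.exp (γ * t) - 1) := by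
      apply mul_nonneg (mul_nonneg hA h3.le); linarith
    have h5 := hsplit t
    simp only [hwdef]
    nlinarith
  -- nonnegativity of w1 on [0,∞)
  have hw1nn : ∀ t : ℝ, 0 ≤ t → 0 ≤ w1 t := by
    intro t ht
    have h2 : 1 ≤ Real.exp (γ * t) := Real.one_le_exp (by positivity)
    have h3 : 0 < Real.exp (lm * t) := Real.exp_pos _
    have h4 : 0 ≤ A * lp * Real.exp (lm * t) * (Real.exp (γ * t) - 1) := by
      apply mul_nonneg (mul_nonneg (mul_nonneg hA hlp) h3.le); linarith
    have h6 : 0 ≤ Real.exp (lm * t) * m := mul_nonneg h3.le hm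
    have h7 : Real.exp (lm * t) * m ≤ Real.exp (lm * t) * (A * lp + B * lm) :=
      mul_le_mul_of_nonneg_left hABm.ge h3.le
    simp only [hw1def]
    rw [hsplit t]
    nlinarith
  -- derivative facts
  have hexp : ∀ (c t : ℝ), HasDerivAt (fun s : ℝ => Real.exp (c * s)) (c * Real.exp (c * t)) t := by
    intro c t
    have := ((hasDerivAt_id t).const_mul c).exp
    simpa [mul_comm] using this
  have hwd : ∀ t : ℝ, HasDerivAt w (w1 t) t := by
    intro t
    have h1 := ((hexp lp t).const_mul A).add ((hexp lm t).const_mul B)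
    simp only [hwdef, hw1def]
    convert h1 using 1
    · rfl
    · rfl
    · rfl
    · ring
  have hw1d : ∀ t : ℝ, HasDerivAt w1 (w2 t) t := by
    intro t
    have h1 := ((hexp lp t).const_mul (A * lp)).add ((hexp lm t).const_mul (B * lm))
    simp only [hw1def, hw2def]
    convert h1 using 1
    · rfl
    · rfl
    · rfl
    · ring
  -- the characteristic identity : w2 = -κ w1 + (a σ²/2) w
  have hchar_p : lp ^ 2 = -κ * lp + a * σ ^ 2 / 2 := by
    simp only [hlpdef]
    linear_combination hγ2 / 4
  have hchar_m : lm ^ 2 = -κ * lm + a * σ ^ 2 / 2 := by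
    simp only [hlmdef]
    linear_combination hγ2 / 4
  have hode : ∀ t : ℝ, w2 t = -κ * w1 t + a * σ ^ 2 / 2 * w t := by
    intro t
    simp only [hwdef, hw1def, hw2def]
    rw [hchar_p, hchar_m]
    ring
  have hw0 : w 0 = 1 := by
    simp only [hwdef, mul_zero, Real.exp_zero, mul_one]; exact hAB
  have hw10 : w1 0 = m := by
    simp only [hw1def, mul_zero, Real.exp_zero, mul_one]; exact hABm
  clear_value γ lp lm m A B w w1 w2
  clear hγdef hlpdef hlmdef hmdef hAdef hBdef hwdef hw1def hw2def hsplit hexp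
  refine ⟨fun t => -(2 / σ ^ 2) * (w1 t / w t), ?_, ?_, ?_⟩
  · -- initial condition
    show -(2 / σ ^ 2) * (w1 0 / w 0) = -u
    rw [hw0, hw10, hmu]
    field_simp
  · -- the ODE
    intro t ht
    have hne : w t ≠ 0 := (hwpos t ht).ne'
    have hd := ((hw1d t).div (hwd t) hne).const_mul (-(2 / σ ^ 2))
    have heq : -(2 / σ ^ 2) * ((w2 t * w t - w1 t * w1 t) / w t ^ 2)
        = -κ * (-(2 / σ ^ 2) * (w1 t / w t))
          + σ ^ 2 / 2 * (-(2 / σ ^ 2) * (w1 t / w t)) ^ 2 - a := by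
      rw [hode t]
      field_simp
      ring
    rw [heq] at hd
    exact hd
  · -- nonpositivity
    intro t ht
    have h1 : 0 ≤ w1 t / w t := div_nonneg (hw1nn t ht) (hwpos t ht).le
    have h2 : -(2 / σ ^ 2) ≤ 0 := by
      have : 0 < 2 / σ ^ 2 := by positivity
      linarith
    exact mul_nonpos_of_nonpos_of_nonneg h2 h1
end
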